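/- For every R > ‖τ′‖_∞ the limit lim_{n→∞} 𝔫(τ,R;n)^{1/n} exists and equals inf_{n≥1} 𝔫(τ,R;n)^{1/n}; moreover this limit is independent of the choice of R > ‖τ′‖_∞, i.e. for any R₁, R₂ > ‖τ′‖_∞ one has lim_{n→∞} 𝔫(τ,R₁;n)^{1/n} = lim_{n→∞} 𝔫(τ,R₂;n)^{1/n}. In particular, if this common value 𝔫(τ) satisfies 𝔫(τ) ≥ e^ρ then 𝔫(τ,R;n) ≥ e^{ρn} for all n ≥ 1. -/

import Mathlib

noncomputable section

open Filter Set Topology MeasureTheory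

/-- The circle `ℝ/ℤ`. -/
abbrev 𝕊 : Type := UnitAddCircle

/-- The canonical representative in `[0,1)` of a point of the circle. -/
def rep (x : 𝕊) : ℝ := (AddCircle.equivIco 1 0 x : ℝ)

/-- A `C^r` expanding map of the circle of degree `ℓ`, presented by a lift `ℝ → ℝ`,
together with the expansion constants `1 < λ ≤ Λ` bounding its derivative. -/
structure ExpMap (r : ℕ) (ℓ : ℕ) : Type where
  toFun : ℝ → ℝ
  contDiff : ContDiff ℝ r toFun
  degree : ∀ x : ℝ, toFun (x + 1) = toFun x + ℓ
  lam : ℝ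
  Lam : ℝ
  one_lt_lam : 1 < lam
  lam_le_Lam : lam ≤ Lam
  lam_le_deriv : ∀ x : ℝ, lam ≤ deriv toFun x
  deriv_le_Lam : ∀ x : ℝ, deriv toFun x ≤ Lam

/-- A real-valued `C^s` function on the circle, presented by a `1`-periodic lift. -/
structure CrFun (s : ℕ∞) : Type where
  toFun : ℝ → ℝ
  contDiff : ContDiff ℝ s toFun
  periodic : ∀ x : ℝ, toFun (x + 1) = toFun x

variable {r ℓ : ℕ}

/-- The induced map on the circle. -/
def ExpMap.map (E : ExpMap r ℓ) : 𝕊 → 𝕊 := fun x => ((E.toFun (rep x) : ℝ) : 𝕊)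

/-- `(E^n)'(x)`, the derivative of the `n`-th iterate at a circle point. -/
def ExpMap.derivn (E : ExpMap r ℓ) (n : ℕ) (x : 𝕊) : ℝ := deriv (E.toFun^[n]) (rep x)

/-- `‖τ'‖_∞`, the sup-norm of the derivative of `τ`. -/
def CrFun.dsup {s : ℕ∞} (τ : CrFun s) : ℝ :=
  sSup ((fun x => |deriv τ.toFun x|) '' Set.Icc (0:ℝ) 1)

/-- The skew product `f = f_{E,τ} : 𝕋² → 𝕋²`, `f(x,s) = (E x, s + τ x)`. -/
def skew (E : ExpMap r ℓ) {s : ℕ∞} (τ : CrFun s) : 𝕊 × 𝕊 → 𝕊 × 𝕊 :=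
  fun z => (E.map z.1, z.2 + ((τ.toFun (rep z.1) : ℝ) : 𝕊))

/-- The Jacobian matrix `Df(z)`, depending only on the base coordinate. -/
def Jac1 (E : ExpMap r ℓ) {s : ℕ∞} (τ : CrFun s) (x : 𝕊) : Matrix (Fin 2) (Fin 2) ℝ :=
  !![deriv E.toFun (rep x), 0; deriv τ.toFun (rep x), 1]

/-- The Jacobian matrix `Df^n(z)` of the `n`-th iterate. -/
def Jacn (E : ExpMap r ℓ) {s : ℕ∞} (τ : CrFun s) : ℕ → 𝕊 × 𝕊 → Matrix (Fin 2) (Fin 2) ℝ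
  | 0, _ => 1
  | n+1, z => Jacn E τ n (skew E τ z) * Jac1 E τ z.1

/-- `Df^n` as a function of the base point only. -/
def JacnB (E : ExpMap r ℓ) {s : ℕ∞} (τ : CrFun s) (n : ℕ) (x : 𝕊) : Matrix (Fin 2) (Fin 2) ℝ :=
  Jacn E τ n (x, (0 : 𝕊))

/-- The cone `K_R = {(ξ,η) : |η| ≤ ϑ_R |ξ|}` with `ϑ_R = R/(λ-1)`. -/
def ExpMap.cone (E : ExpMap r ℓ) (R : ℝ) : Set (Fin 2 → ℝ) :=
  {v | |v 1| ≤ R / (E.lam - 1) * |v 0|}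

/-- A unit vector of `ℝ²`. -/
def IsUnitVec (v : Fin 2 → ℝ) : Prop := v 0 ^ 2 + v 1 ^ 2 = 1

/-- `𝔫(τ,R;n) = sup_z sup_v #{ζ ∈ f^{-n}(z) : v ∈ Df^n(ζ) K_R}`. -/
def nQ (E : ExpMap r ℓ) {s : ℕ∞} (τ : CrFun s) (R : ℝ) (n : ℕ) : ℝ :=
  sSup {c : ℝ | ∃ (z : 𝕊 × 𝕊) (v : Fin 2 → ℝ), IsUnitVec v ∧
    c = ({ζ : 𝕊 × 𝕊 | (skew E τ)^[n] ζ = z ∧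
      v ∈ (Jacn E τ n ζ).mulVec '' E.cone R}.ncard : ℝ)}

/-- `𝔫(τ) = lim_n 𝔫(τ,R;n)^{1/n}` (computed with the choice `R = ‖τ'‖_∞ + 1`). -/
def nlim (E : ExpMap r ℓ) {s : ℕ∞} (τ : CrFun s) : ℝ :=
  limUnder atTop (fun n : ℕ => nQ E τ (τ.dsup + 1) n ^ ((n : ℝ)⁻¹))

/-- The `C^r` distance between two (lifts of) functions on the circle. -/
def crDist (r : ℕ) (f g : ℝ → ℝ) : ℝ :=
  sSup {c : ℝ | ∃ i ≤ r, ∃ x ∈ Set.Icc (0:ℝ) 1, c = |iteratedDeriv i f x - iteratedDeriv i g x|}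

/-- `x_α`: the preimage point of `x` coded by the word `α = (α_n, …, α_1)`,
given the system `g` of inverse branches of `E`; here `α i` is the letter `α_{i+1}`. -/
def codePt (g : Fin ℓ → 𝕊 → 𝕊) : {n : ℕ} → (Fin n → Fin ℓ) → 𝕊 → 𝕊
  | 0, _, x => x
  | n+1, α, x => g (α (Fin.last n)) (codePt g (fun i : Fin n => α i.castSucc) x)

/-- `[α]_p`, the truncation of a word to length `p`. -/
def trunc {ℓ n : ℕ} (α : Fin n → Fin ℓ) (p : ℕ) (h : p ≤ n) : Fin p → Fin ℓ :=
  fun i => α (Fin.castLE h i)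

/-- `S_n(x;α;ψ) = Σ_{k=1}^n ψ'(x_{[α]_k}) / (E^k)'(x_{[α]_k})`. -/
def Ssum (E : ExpMap r ℓ) (g : Fin ℓ → 𝕊 → 𝕊) (ψ : ℝ → ℝ) {n : ℕ}
    (α : Fin n → Fin ℓ) (x : 𝕊) : ℝ :=
  ∑ k : Fin n, deriv ψ (rep (codePt g (trunc α (k.1+1) k.isLt) x)) /
    E.derivn (k.1+1) (codePt g (trunc α (k.1+1) k.isLt) x)

/-- `S(x;ω) = Σ_{k=1}^∞ τ'(x_{[ω]_k}) / (E^k)'(x_{[ω]_k})` for an infinite word `ω`. -/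
def Sinf (E : ExpMap r ℓ) (g : Fin ℓ → 𝕊 → 𝕊) (ψ : ℝ → ℝ) (y : 𝕊) (ω : ℕ → Fin ℓ) : ℝ :=
  ∑' k : ℕ, deriv ψ (rep (codePt g (fun i : Fin (k+1) => ω i) y)) /
    E.derivn (k+1) (codePt g (fun i : Fin (k+1) => ω i) y)

/-- Faure's counting function `Ñ_{R̃}(n)`. -/
def Ntilde (E : ExpMap r ℓ) (g : Fin ℓ → 𝕊 → 𝕊) {s : ℕ∞} (τ : CrFun s) (Rt : ℝ) (n : ℕ) : ℝ :=
  sSup {c : ℝ | ∃ (y : 𝕊) (η : ℝ),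
    c = ({α : Fin n → Fin ℓ | ∃ ω : ℕ → Fin ℓ, (∀ i : Fin n, ω i = α i) ∧
      |η - Sinf E g τ.toFun y ω| ≤ Rt * (E.derivn n (codePt g α y))⁻¹}.ncard : ℝ)}

/-- `𝐧(τ,R;n)`. -/
def nnQ (E : ExpMap r ℓ) {s : ℕ∞} (τ : CrFun s) (R : ℝ) (n : ℕ) : ℝ :=
  sSup {c : ℝ | ∃ (z : 𝕊 × 𝕊) (v : Fin 2 → ℝ), IsUnitVec v ∧
    c = ∑ᶠ ζ ∈ {ζ : 𝕊 × 𝕊 | (skew E τ)^[n] ζ = z ∧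
        v ∈ (Jacn E τ n ζ).mulVec '' E.cone R}, ((Jacn E τ n ζ).det)⁻¹}

/-- `𝐧(τ) = limsup_n 𝐧(τ,R;n)^{1/n}` (with `R = ‖τ'‖_∞ + 1`). -/
def nnlim (E : ExpMap r ℓ) {s : ℕ∞} (τ : CrFun s) : ℝ :=
  limsup (fun n : ℕ => nnQ E τ (τ.dsup + 1) n ^ ((n : ℝ)⁻¹)) atTop

/-- `𝐦(τ,R;n)`. -/
def mmQ (E : ExpMap r ℓ) {s : ℕ∞} (τ : CrFun s) (R : ℝ) (n : ℕ) : ℝ :=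
  sSup {c : ℝ | ∃ (z w : 𝕊 × 𝕊), (skew E τ)^[n] w = z ∧
    c = ∑ᶠ ζ ∈ {ζ : 𝕊 × 𝕊 | (skew E τ)^[n] ζ = z ∧
        ((Jacn E τ n ζ).mulVec '' E.cone R) ∩ ((Jacn E τ n w).mulVec '' E.cone R) = {0}},
      ((Jacn E τ n ζ).det)⁻¹}

/-- `𝐦(τ) = limsup_n 𝐦(τ,R;n)^{1/n}` (with `R = ‖τ'‖_∞ + 1`). -/
def mmlim (E : ExpMap r ℓ) {s : ℕ∞} (τ : CrFun s) : ℝ :=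
  limsup (fun n : ℕ => mmQ E τ (τ.dsup + 1) n ^ ((n : ℝ)⁻¹)) atTop

/-- `χ = lim_n (min_x (E^n)'(x))^{-1/n}`. -/
def chi (E : ExpMap r ℓ) : ℝ :=
  limUnder atTop (fun n : ℕ => (sInf (Set.range (E.derivn n))) ^ (-((n : ℝ)⁻¹)))

/-- The Gram-determinant Jacobian `Jac(M) = √(det (M Mᵀ))` of a `p × m` matrix,
which equals the modulus of the Jacobian determinant of the restriction of the
associated linear map to the orthogonal complement of its kernel when the map is
surjective, and `0` otherwise. -/
def gramJac {p m : ℕ} (M : Matrix (Fin p) (Fin m) ℝ) : ℝ :=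
  Real.sqrt (M * M.transpose).det

/-- The Jacobian of a linear map between Euclidean spaces. -/
def linJac {d e : ℕ} (L : EuclideanSpace ℝ (Fin d) →ₗ[ℝ] EuclideanSpace ℝ (Fin e)) : ℝ :=
  gramJac (LinearMap.toMatrix (EuclideanSpace.basisFun (Fin d) ℝ).toBasis
    (EuclideanSpace.basisFun (Fin e) ℝ).toBasis L)



section FinalAux
variable {r ℓ : ℕ}

lemma rep_mem (x : 𝕊) : rep x ∈ Set.Ico (0:ℝ) 1 := by
  have h := (AddCircle.equivIco 1 0 x).2
  simpa [rep] using h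

lemma coe_rep (x : 𝕊) : ((rep x : ℝ) : 𝕊) = x :=
  (AddCircle.equivIco 1 0).symm_apply_apply x

lemma rep_coe {t : ℝ} (ht : t ∈ Set.Ico (0:ℝ) 1) : rep ((t : ℝ) : 𝕊) = t := by
  unfold rep
  have h : (AddCircle.equivIco 1 0) ((t:ℝ):𝕊) = ⟨t, by simpa using ht⟩ := by
    rw [Equiv.apply_eq_iff_eq_symm_apply]; rfl
  rw [h]

lemma coe_add_int_eq (c : ℝ) (m : ℤ) : (((c + m : ℝ)) : 𝕊) = (c : 𝕊) := by
  rw [QuotientAddGroup.eq_iff_sub_mem]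
  refine ⟨m, by simp⟩

namespace ExpMap
variable (E : ExpMap r ℓ)

lemma lam_pos : 0 < E.lam := lt_trans one_pos E.one_lt_lam

lemma sm : StrictMono E.toFun :=
  strictMono_of_deriv_pos fun x => lt_of_lt_of_le (lt_trans one_pos E.one_lt_lam) (E.lam_le_deriv x)

lemma fiber_finite (y : 𝕊) : {x : 𝕊 | E.map x = y}.Finite ∧
    ({x : 𝕊 | E.map x = y}.ncard ≤ ℓ) := by
  classical
  set c := rep y with hc
  set g : 𝕊 → ℤ := fun x => ⌈E.toFun (rep x) - c⌉ with hg
  -- each fiber point gives an integer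
  have key : ∀ x ∈ {x : 𝕊 | E.map x = y}, E.toFun (rep x) - c = (g x : ℝ) := by
    intro x hx
    have h1 : ((E.toFun (rep x) : ℝ) : 𝕊) = ((c : ℝ) : 𝕊) := by
      simpa [ExpMap.map, hc, coe_rep] using hx
    rw [QuotientAddGroup.eq_iff_sub_mem] at h1
    obtain ⟨m, hm⟩ := h1
    have hm' : E.toFun (rep x) - c = (m : ℝ) := by
      simpa using hm.symm
    rw [hg]; simp only []
    rw [hm']; simp
  have hinj : Set.InjOn g {x : 𝕊 | E.map x = y} := by
    intro x hx x' hx' hgx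
    have e1 := key x hx
    have e2 := key x' hx'
    have h3 : E.toFun (rep x) - c = E.toFun (rep x') - c := by rw [e1, e2, hgx]
    have : E.toFun (rep x) = E.toFun (rep x') := by linarith
    have hrr : rep x = rep x' := E.sm.injective this
    calc x = ((rep x : ℝ) : 𝕊) := (coe_rep x).symm
    _ = ((rep x' : ℝ) : 𝕊) := by rw [hrr]
    _ = x' := coe_rep x'
  have hrange : g '' {x : 𝕊 | E.map x = y} ⊆
      ↑(Finset.Ico ⌈E.toFun 0 - c⌉ (⌈E.toFun 0 - c⌉ + ℓ)) := by
    rintro _ ⟨x, hx, rfl⟩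
    have hmem := rep_mem x
    have h0 : E.toFun 0 ≤ E.toFun (rep x) := E.sm.monotone hmem.1
    have h1 : E.toFun (rep x) < E.toFun 0 + ℓ := by
      have := E.sm hmem.2
      rwa [show E.toFun 1 = E.toFun 0 + ℓ by simpa using E.degree 0] at this
    have hk := key x hx
    simp only [Finset.coe_Ico, Set.mem_Ico]
    constructor
    · rw [Int.ceil_le]; linarith
    · have : (g x : ℝ) < (⌈E.toFun 0 - c⌉ : ℝ) + ℓ := by
        have h2 : (⌈E.toFun 0 - c⌉ : ℝ) ≥ E.toFun 0 - c := Int.le_ceil _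
        linarith
      exact_mod_cast this
  have hfin : {x : 𝕊 | E.map x = y}.Finite := by
    refine Set.Finite.of_finite_image ?_ hinj
    exact Set.Finite.subset (Finset.finite_toSet _) hrange
  refine ⟨hfin, ?_⟩
  calc {x : 𝕊 | E.map x = y}.ncard = (g '' {x : 𝕊 | E.map x = y}).ncard :=
        (Set.ncard_image_of_injOn hinj).symm
  _ ≤ (↑(Finset.Ico ⌈E.toFun 0 - c⌉ (⌈E.toFun 0 - c⌉ + ℓ)) : Set ℤ).ncard :=
        Set.ncard_le_ncard hrange (Finset.finite_toSet _)
  _ = ℓ := by rw [Set.ncard_coe_finset, Int.card_Ico]; simp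

lemma fiber_nonempty (hl : 1 ≤ ℓ) (y : 𝕊) : {x : 𝕊 | E.map x = y}.Nonempty := by
  set c := rep y with hc
  set m : ℤ := ⌈E.toFun 0 - c⌉ with hm
  have h1 : E.toFun 0 ≤ c + m := by
    have := Int.le_ceil (E.toFun 0 - c); rw [← hm] at this; linarith
  have h2 : c + m < E.toFun 1 := by
    have h3 : (m : ℝ) < E.toFun 0 - c + 1 := by
      have := Int.ceil_lt_add_one (E.toFun 0 - c); rw [← hm] at this; exact this
    have h4 : E.toFun 1 = E.toFun 0 + ℓ := by simpa using E.degree 0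
    have h5 : (1 : ℝ) ≤ ℓ := by exact_mod_cast hl
    rw [h4]; linarith
  have hIVT := intermediate_value_Ico (zero_le_one) (E.contDiff.continuous.continuousOn)
    (show c + m ∈ Set.Ico (E.toFun 0) (E.toFun 1) from ⟨h1, h2⟩)
  obtain ⟨t, ht, hFt⟩ := hIVT
  refine ⟨((t : ℝ) : 𝕊), ?_⟩
  show ((E.toFun (rep ((t:ℝ):𝕊)) : ℝ) : 𝕊) = y
  rw [rep_coe ht, hFt, coe_add_int_eq, hc, coe_rep]

end ExpMap

section Fibers
variable (E : ExpMap r ℓ) {s : ℕ∞} (τ : CrFun s)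

/-- generic fiberwise counting bound -/
lemma ncard_le_of_fiber_bound {α β : Type*} {S : Set α} {T : Set β} (f : α → β)
    (hS : S.Finite) (hT : T.Finite) (hmap : ∀ a ∈ S, f a ∈ T)
    {B : ℝ} (hfib : ∀ b ∈ T, (({a ∈ S | f a = b}).ncard : ℝ) ≤ B) :
    (S.ncard : ℝ) ≤ T.ncard * B := by
  classical
  have hc : hS.toFinset.card = ∑ b ∈ hT.toFinset, (hS.toFinset.filter (fun a => f a = b)).card :=
    Finset.card_eq_sum_card_fiberwise (by intro a ha; simp only [Finset.mem_coe, Set.Finite.mem_toFinset] at *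
                                          exact hmap a ha)
  have hfs : ∀ b ∈ hT.toFinset, ((hS.toFinset.filter (fun a => f a = b)).card : ℝ) ≤ B := by
    intro b hb
    rw [Set.Finite.mem_toFinset] at hb
    have hset : {a ∈ S | f a = b} = ↑(hS.toFinset.filter (fun a => f a = b)) := by
      ext a; simp [Set.Finite.mem_toFinset]
    have := hfib b hb
    rwa [hset, Set.ncard_coe_finset] at this
  have h1 : (S.ncard : ℝ) = ((hS.toFinset.card : ℕ) : ℝ) := by
    rw [Set.ncard_eq_toFinset_card _ hS]
  rw [h1, hc]
  push_cast
  calc (∑ b ∈ hT.toFinset, ((hS.toFinset.filter (fun a => f a = b)).card : ℝ))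
      ≤ ∑ _b ∈ hT.toFinset, B := Finset.sum_le_sum hfs
  _ = hT.toFinset.card * B := by rw [Finset.sum_const]; simp [nsmul_eq_mul]
  _ = T.ncard * B := by rw [Set.ncard_eq_toFinset_card _ hT]

lemma skew_fiber (z : 𝕊 × 𝕊) :
    {ζ : 𝕊 × 𝕊 | skew E τ ζ = z} =
      (fun x => (x, z.2 - ((τ.toFun (rep x) : ℝ) : 𝕊))) '' {x : 𝕊 | E.map x = z.1} := by
  ext ζ
  simp only [Set.mem_setOf_eq, Set.mem_image, skew, Prod.ext_iff]
  constructor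
  · rintro ⟨h1, h2⟩
    exact ⟨ζ.1, h1, rfl, by rw [← h2]; abel⟩
  · rintro ⟨x, hx, rfl, h2⟩
    exact ⟨hx, by rw [← h2]; abel⟩

lemma skew_fiber_finite (z : 𝕊 × 𝕊) : {ζ : 𝕊 × 𝕊 | skew E τ ζ = z}.Finite := by
  rw [skew_fiber]
  exact Set.Finite.image _ (E.fiber_finite z.1).1

lemma skew_fiber_ncard (z : 𝕊 × 𝕊) : {ζ : 𝕊 × 𝕊 | skew E τ ζ = z}.ncard ≤ ℓ := by
  rw [skew_fiber]
  exact le_trans (Set.ncard_image_le (E.fiber_finite z.1).1) (E.fiber_finite z.1).2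

lemma skew_fiber_nonempty (hl : 1 ≤ ℓ) (z : 𝕊 × 𝕊) :
    {ζ : 𝕊 × 𝕊 | skew E τ ζ = z}.Nonempty := by
  rw [skew_fiber]
  exact (E.fiber_nonempty hl z.1).image _

lemma iter_fiber_finite (n : ℕ) (z : 𝕊 × 𝕊) :
    {ζ : 𝕊 × 𝕊 | (skew E τ)^[n] ζ = z}.Finite := by
  induction n generalizing z with
  | zero => simpa using Set.finite_singleton z
  | succ n ih =>
    have hdec : {ζ : 𝕊 × 𝕊 | (skew E τ)^[n+1] ζ = z} =
        ⋃ w ∈ {w : 𝕊 × 𝕊 | skew E τ w = z}, {ζ : 𝕊 × 𝕊 | (skew E τ)^[n] ζ = w} := by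
      ext ζ
      simp only [Set.mem_setOf_eq, Set.mem_iUnion, exists_prop, Function.iterate_succ_apply']
      constructor
      · intro h; exact ⟨(skew E τ)^[n] ζ, h, rfl⟩
      · rintro ⟨w, hw, rfl⟩; exact hw
    rw [hdec]
    exact Set.Finite.biUnion (skew_fiber_finite E τ z) (fun w _ => ih w)

lemma iter_fiber_nonempty (hl : 1 ≤ ℓ) (n : ℕ) (z : 𝕊 × 𝕊) :
    {ζ : 𝕊 × 𝕊 | (skew E τ)^[n] ζ = z}.Nonempty := by
  induction n generalizing z with
  | zero => exact ⟨z, by simp⟩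
  | succ n ih =>
    obtain ⟨w, hw⟩ := skew_fiber_nonempty E τ hl z
    obtain ⟨ζ, hζ⟩ := ih w
    exact ⟨ζ, by simp only [Set.mem_setOf_eq, Function.iterate_succ_apply']
                 rw [hζ]; exact hw⟩

lemma iter_fiber_ncard (n : ℕ) (z : 𝕊 × 𝕊) :
    ({ζ : 𝕊 × 𝕊 | (skew E τ)^[n] ζ = z}.ncard : ℝ) ≤ (ℓ : ℝ) ^ n := by
  induction n generalizing z with
  | zero =>
    have : {ζ : 𝕊 × 𝕊 | (skew E τ)^[0] ζ = z} = {z} := by ext; simp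
    rw [this]; simp
  | succ n ih =>
    have hb := ncard_le_of_fiber_bound (S := {ζ : 𝕊 × 𝕊 | (skew E τ)^[n+1] ζ = z})
      (T := {w : 𝕊 × 𝕊 | skew E τ w = z}) (fun ζ => (skew E τ)^[n] ζ)
      (iter_fiber_finite E τ (n+1) z) (skew_fiber_finite E τ z)
      (by intro a ha; simp only [Set.mem_setOf_eq] at *
          rw [Function.iterate_succ_apply'] at ha; exact ha)
      (B := (ℓ : ℝ) ^ n)
      (by intro w hw
          refine le_trans ?_ (ih w)
          have hsub : {a ∈ {ζ : 𝕊 × 𝕊 | (skew E τ)^[n+1] ζ = z} | (skew E τ)^[n] a = w} ⊆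
              {ζ : 𝕊 × 𝕊 | (skew E τ)^[n] ζ = w} := fun a ha => ha.2
          exact_mod_cast Nat.cast_le.mpr (Set.ncard_le_ncard hsub (iter_fiber_finite E τ n w)))
    calc ({ζ : 𝕊 × 𝕊 | (skew E τ)^[n+1] ζ = z}.ncard : ℝ)
        ≤ ({w : 𝕊 × 𝕊 | skew E τ w = z}.ncard : ℝ) * (ℓ : ℝ) ^ n := hb
    _ ≤ (ℓ : ℝ) * (ℓ : ℝ) ^ n := by
        refine mul_le_mul_of_nonneg_right ?_ (by positivity)
        exact_mod_cast skew_fiber_ncard E τ z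
    _ = (ℓ : ℝ) ^ (n+1) := by ring

end Fibers

lemma mulVec2 (a b c d : ℝ) (w : Fin 2 → ℝ) :
    (!![a, b; c, d] : Matrix (Fin 2) (Fin 2) ℝ).mulVec w
      = ![a * w 0 + b * w 1, c * w 0 + d * w 1] := by
  funext i
  fin_cases i <;>
    simp [Matrix.mulVec, dotProduct, Fin.sum_univ_two, Matrix.cons_val_zero,
      Matrix.cons_val_one]

section Jac
variable (E : ExpMap r ℓ) {s : ℕ∞} (τ : CrFun s)

lemma Jacn_add (a b : ℕ) (ζ : 𝕊 × 𝕊) :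
    Jacn E τ (a + b) ζ = Jacn E τ b ((skew E τ)^[a] ζ) * Jacn E τ a ζ := by
  induction a generalizing ζ with
  | zero => simp [Jacn]
  | succ a ih =>
    have h1 : a + 1 + b = (a + b) + 1 := by omega
    rw [h1]
    show Jacn E τ (a + b) (skew E τ ζ) * Jac1 E τ ζ.1 = _
    rw [ih (skew E τ ζ)]
    rw [Matrix.mul_assoc]
    rw [← Function.iterate_succ_apply]
    rfl

lemma Jacn_one (ζ : 𝕊 × 𝕊) : Jacn E τ 1 ζ = Jac1 E τ ζ.1 := by
  show Jacn E τ 0 (skew E τ ζ) * Jac1 E τ ζ.1 = _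
  simp [Jacn]

lemma Jacn_tri (n : ℕ) (ζ : 𝕊 × 𝕊) :
    ∃ a c : ℝ, Jacn E τ n ζ = !![a, 0; c, 1] ∧ E.lam ^ n ≤ a := by
  induction n generalizing ζ with
  | zero => exact ⟨1, 0, by simp [Jacn, Matrix.one_fin_two], by simp⟩
  | succ n ih =>
    obtain ⟨a, c, h1, h2⟩ := ih (skew E τ ζ)
    refine ⟨a * deriv E.toFun (rep ζ.1), c * deriv E.toFun (rep ζ.1) + deriv τ.toFun (rep ζ.1),
      ?_, ?_⟩
    · show Jacn E τ n (skew E τ ζ) * Jac1 E τ ζ.1 = _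
      rw [h1, Jac1, Matrix.mul_fin_two]
      congr 1 <;> ring
    · have he : E.lam ≤ deriv E.toFun (rep ζ.1) := E.lam_le_deriv _
      have hl0 : (0:ℝ) < E.lam := E.lam_pos
      calc E.lam ^ (n+1) = E.lam ^ n * E.lam := by ring
      _ ≤ a * deriv E.toFun (rep ζ.1) :=
          mul_le_mul h2 he (le_of_lt hl0) (le_trans (le_of_lt (pow_pos hl0 n)) h2)

end Jac

/-- slope cones -/
def inCone (s : ℝ) (w : Fin 2 → ℝ) : Prop := |w 1| ≤ s * |w 0|

lemma cone_eq_inCone (E : ExpMap r ℓ) (R : ℝ) : ∀ v, v ∈ E.cone R ↔ inCone (R / (E.lam - 1)) v :=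
  fun _ => Iff.rfl

lemma inCone_mono {s s' : ℝ} (h : s ≤ s') {w : Fin 2 → ℝ} (hw : inCone s w) : inCone s' w :=
  le_trans hw (mul_le_mul_of_nonneg_right h (abs_nonneg _))

lemma inCone_smul {s t : ℝ} {w : Fin 2 → ℝ} (hw : inCone s w) : inCone s (t • w) := by
  unfold inCone at *
  simp only [Pi.smul_apply, smul_eq_mul, abs_mul]
  calc |t| * |w 1| ≤ |t| * (s * |w 0|) := mul_le_mul_of_nonneg_left hw (abs_nonneg t)
  _ = s * (|t| * |w 0|) := by ring

section Cone
variable (E : ExpMap r ℓ) {s : ℕ∞} (τ : CrFun s)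

lemma dsup_bound (hs : 1 ≤ s) : (0 ≤ τ.dsup) ∧ ∀ t ∈ Set.Icc (0:ℝ) 1, |deriv τ.toFun t| ≤ τ.dsup := by
  have hcont : Continuous (deriv τ.toFun) := τ.contDiff.continuous_deriv (by exact_mod_cast hs)
  have hbdd : BddAbove ((fun x => |deriv τ.toFun x|) '' Set.Icc (0:ℝ) 1) :=
    IsCompact.bddAbove_image isCompact_Icc hcont.abs.continuousOn
  constructor
  · refine le_trans (abs_nonneg (deriv τ.toFun 0)) (le_csSup hbdd ?_)
    exact ⟨0, by norm_num, rfl⟩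
  · intro t ht
    exact le_csSup hbdd ⟨t, ht, rfl⟩

lemma cone_step {d : ℝ} (hτd : ∀ x : 𝕊, |deriv τ.toFun (rep x)| ≤ d)
    (x : 𝕊) {s₀ : ℝ} (hs : 0 ≤ s₀) {w : Fin 2 → ℝ} (hw : inCone s₀ w) :
    inCone ((d + s₀) / E.lam) ((Jac1 E τ x).mulVec w) := by
  have hd0 : 0 ≤ d := le_trans (abs_nonneg _) (hτd x)
  have hmv : (Jac1 E τ x).mulVec w =
      ![deriv E.toFun (rep x) * w 0 + 0 * w 1,
        deriv τ.toFun (rep x) * w 0 + 1 * w 1] := mulVec2 _ _ _ _ w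
  rw [hmv]
  unfold inCone at *
  have he : E.lam ≤ deriv E.toFun (rep x) := E.lam_le_deriv _
  have hl0 : (0:ℝ) < E.lam := E.lam_pos
  simp only [Matrix.cons_val_zero, Matrix.cons_val_one, Matrix.head_cons]
  have h1 : |deriv τ.toFun (rep x) * w 0 + 1 * w 1| ≤ (d + s₀) * |w 0| := by
    calc |deriv τ.toFun (rep x) * w 0 + 1 * w 1|
        ≤ |deriv τ.toFun (rep x) * w 0| + |1 * w 1| := abs_add_le _ _
    _ = |deriv τ.toFun (rep x)| * |w 0| + |w 1| := by rw [abs_mul, one_mul]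
    _ ≤ d * |w 0| + s₀ * |w 0| := add_le_add (mul_le_mul_of_nonneg_right (hτd x) (abs_nonneg _)) hw
    _ = (d + s₀) * |w 0| := by ring
  have h2 : (d + s₀) * |w 0| ≤ (d + s₀) / E.lam * |deriv E.toFun (rep x) * w 0 + 0 * w 1| := by
    rw [zero_mul, add_zero, abs_mul]
    have he0 : |deriv E.toFun (rep x)| = deriv E.toFun (rep x) :=
      abs_of_pos (lt_of_lt_of_le hl0 he)
    rw [he0]
    rw [div_mul_eq_mul_div, le_div_iff₀ hl0]
    calc (d + s₀) * |w 0| * E.lam = (d + s₀) * (E.lam * |w 0|) := by ring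
    _ ≤ (d + s₀) * (deriv E.toFun (rep x) * |w 0|) := by
        refine mul_le_mul_of_nonneg_left (mul_le_mul_of_nonneg_right he (abs_nonneg _))
          (by linarith)
    _ = (d + s₀) * (deriv E.toFun (rep x) * |w 0|) := rfl
  linarith

lemma cone_invariant {d R : ℝ} (hτd : ∀ x : 𝕊, |deriv τ.toFun (rep x)| ≤ d) (hdR : d ≤ R)
    (n : ℕ) (ζ : 𝕊 × 𝕊) {w : Fin 2 → ℝ} (hw : inCone (R / (E.lam - 1)) w) :
    inCone (R / (E.lam - 1)) ((Jacn E τ n ζ).mulVec w) := by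
  have hl1 : (1:ℝ) < E.lam := E.one_lt_lam
  have hd0 : 0 ≤ d := le_trans (abs_nonneg _) (hτd ζ.1)
  have hθ0 : 0 ≤ R / (E.lam - 1) := div_nonneg (le_trans hd0 hdR) (by linarith)
  induction n generalizing w with
  | zero => simpa [Jacn] using hw
  | succ n ih =>
    have hc : Jacn E τ (n + 1) ζ = Jac1 E τ ((skew E τ)^[n] ζ).1 * Jacn E τ n ζ := by
      rw [Jacn_add E τ n 1, Jacn_one]
    rw [hc, ← Matrix.mulVec_mulVec]
    have hstep := cone_step E τ hτd ((skew E τ)^[n] ζ).1 hθ0 (ih hw)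
    refine inCone_mono ?_ hstep
    have hθR : R / (E.lam - 1) * (E.lam - 1) = R := div_mul_cancel₀ _ (by linarith)
    rw [div_le_iff₀ E.lam_pos]
    linarith [hθR, hdR]

lemma cone_contract {d : ℝ} (hτd : ∀ x : 𝕊, |deriv τ.toFun (rep x)| ≤ d)
    (n : ℕ) (ζ : 𝕊 × 𝕊) {s₀ : ℝ} (hs : 0 ≤ s₀) {w : Fin 2 → ℝ} (hw : inCone s₀ w) :
    inCone (d / (E.lam - 1) + s₀ / E.lam ^ n) ((Jacn E τ n ζ).mulVec w) := by
  have hl1 : (1:ℝ) < E.lam := E.one_lt_lam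
  have hl0 : (0:ℝ) < E.lam := E.lam_pos
  have hd0 : 0 ≤ d := le_trans (abs_nonneg _) (hτd ζ.1)
  induction n generalizing w s₀ with
  | zero =>
    simp only [Jacn, pow_zero, div_one]
    refine inCone_mono ?_ (by simpa using hw)
    have : 0 ≤ d / (E.lam - 1) := div_nonneg hd0 (by linarith)
    linarith
  | succ n ih =>
    have hc : Jacn E τ (n + 1) ζ = Jac1 E τ ((skew E τ)^[n] ζ).1 * Jacn E τ n ζ := by
      rw [Jacn_add E τ n 1, Jacn_one]
    rw [hc, ← Matrix.mulVec_mulVec]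
    have hmid := ih hs hw
    have hmid0 : 0 ≤ d / (E.lam - 1) + s₀ / E.lam ^ n := by
      have := div_nonneg hd0 (le_of_lt (sub_pos.mpr hl1))
      have := div_nonneg hs (le_of_lt (pow_pos hl0 n))
      linarith
    have hstep := cone_step E τ hτd ((skew E τ)^[n] ζ).1 hmid0 hmid
    refine inCone_mono (le_of_eq ?_) hstep
    have h1 : E.lam - 1 ≠ 0 := by linarith
    have h2 : E.lam ≠ 0 := ne_of_gt hl0
    have h3 : E.lam ^ n ≠ 0 := pow_ne_zero n h2
    field_simp
    ring
end Cone

section NQ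
variable (E : ExpMap r ℓ) {s : ℕ∞} (τ : CrFun s)

def Tset (R : ℝ) (n : ℕ) (z : 𝕊 × 𝕊) (v : Fin 2 → ℝ) : Set (𝕊 × 𝕊) :=
  {ζ : 𝕊 × 𝕊 | (skew E τ)^[n] ζ = z ∧ v ∈ (Jacn E τ n ζ).mulVec '' E.cone R}

def Sset (R : ℝ) (n : ℕ) : Set ℝ :=
  {c : ℝ | ∃ (z : 𝕊 × 𝕊) (v : Fin 2 → ℝ), IsUnitVec v ∧ c = ((Tset E τ R n z v).ncard : ℝ)}

lemma nQ_eq (R : ℝ) (n : ℕ) : nQ E τ R n = sSup (Sset E τ R n) := rfl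

lemma Tset_sub (R : ℝ) (n : ℕ) (z : 𝕊 × 𝕊) (v : Fin 2 → ℝ) :
    Tset E τ R n z v ⊆ {ζ : 𝕊 × 𝕊 | (skew E τ)^[n] ζ = z} := by
  intro ζ hζ; exact hζ.1

lemma Tset_finite (R : ℝ) (n : ℕ) (z : 𝕊 × 𝕊) (v : Fin 2 → ℝ) : (Tset E τ R n z v).Finite :=
  Set.Finite.subset (iter_fiber_finite E τ n z) (Tset_sub E τ R n z v)

lemma unitvec_e0 : IsUnitVec ![1, 0] := by simp [IsUnitVec]

lemma Sset_nonempty (R : ℝ) (n : ℕ) : (Sset E τ R n).Nonempty :=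
  ⟨_, ((0,0) : 𝕊 × 𝕊), ![1,0], unitvec_e0, rfl⟩

lemma Sset_le (R : ℝ) (n : ℕ) {c : ℝ} (hc : c ∈ Sset E τ R n) : c ≤ (ℓ : ℝ) ^ n := by
  obtain ⟨z, v, hv, rfl⟩ := hc
  refine le_trans ?_ (iter_fiber_ncard E τ n z)
  exact_mod_cast Nat.cast_le.mpr
    (Set.ncard_le_ncard (Tset_sub E τ R n z v) (iter_fiber_finite E τ n z))

lemma Sset_bddAbove (R : ℝ) (n : ℕ) : BddAbove (Sset E τ R n) :=
  ⟨(ℓ : ℝ) ^ n, fun c hc => Sset_le E τ R n hc⟩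

lemma ncard_Tset_le_nQ (R : ℝ) (n : ℕ) (z : 𝕊 × 𝕊) {v : Fin 2 → ℝ} (hv : IsUnitVec v) :
    ((Tset E τ R n z v).ncard : ℝ) ≤ nQ E τ R n :=
  le_csSup (Sset_bddAbove E τ R n) ⟨z, v, hv, rfl⟩

lemma nQ_le_pow (R : ℝ) (n : ℕ) : nQ E τ R n ≤ (ℓ : ℝ) ^ n :=
  csSup_le (Sset_nonempty E τ R n) (fun c hc => Sset_le E τ R n hc)

lemma unit_of_smul {w : Fin 2 → ℝ} (hw : 0 < w 0 ^ 2 + w 1 ^ 2) :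
    ∃ t : ℝ, 0 < t ∧ IsUnitVec (t • w) := by
  refine ⟨(Real.sqrt (w 0 ^ 2 + w 1 ^ 2))⁻¹, inv_pos.mpr (Real.sqrt_pos.mpr hw), ?_⟩
  show (_ * w 0) ^ 2 + (_ * w 1) ^ 2 = 1
  have h1 : (Real.sqrt (w 0 ^ 2 + w 1 ^ 2))⁻¹ ^ 2 = (w 0 ^ 2 + w 1 ^ 2)⁻¹ := by
    rw [inv_pow, Real.sq_sqrt (le_of_lt hw)]
  calc ((Real.sqrt (w 0 ^ 2 + w 1 ^ 2))⁻¹ * w 0) ^ 2 + ((Real.sqrt (w 0 ^ 2 + w 1 ^ 2))⁻¹ * w 1) ^ 2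
      = (Real.sqrt (w 0 ^ 2 + w 1 ^ 2))⁻¹ ^ 2 * (w 0 ^ 2 + w 1 ^ 2) := by ring
  _ = 1 := by rw [h1]; exact inv_mul_cancel₀ (ne_of_gt hw)

lemma smul_mem_image {M : Matrix (Fin 2) (Fin 2) ℝ} {R : ℝ} (t : ℝ) {v : Fin 2 → ℝ}
    (hv : v ∈ M.mulVec '' E.cone R) : t • v ∈ M.mulVec '' E.cone R := by
  obtain ⟨u, hu, rfl⟩ := hv
  exact ⟨t • u, inCone_smul hu, Matrix.mulVec_smul M t u⟩

lemma one_le_nQ {R : ℝ} (hR : 0 ≤ R) (n : ℕ) : 1 ≤ nQ E τ R n := by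
  set ζ₀ : 𝕊 × 𝕊 := (0, 0)
  set z := (skew E τ)^[n] ζ₀ with hz
  obtain ⟨a, c, hM, ha⟩ := Jacn_tri E τ n ζ₀
  have ha0 : 0 < a := lt_of_lt_of_le (pow_pos E.lam_pos n) ha
  have hw : (![1,0] : Fin 2 → ℝ) ∈ E.cone R := by
    show |(![1,0] : Fin 2 → ℝ) 1| ≤ R / (E.lam - 1) * |(![1,0] : Fin 2 → ℝ) 0|
    have : (0:ℝ) ≤ R / (E.lam - 1) := div_nonneg hR (by linarith [E.one_lt_lam])
    simp only [Matrix.cons_val_one, Matrix.head_cons, Matrix.cons_val_zero]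
    rw [abs_zero, abs_one, mul_one]; exact this
  set v' := (Jacn E τ n ζ₀).mulVec ![1,0] with hv'
  have hv'e : v' = ![a, c] := by
    rw [hv', hM]
    rw [show (!![a, 0; c, 1] : Matrix (Fin 2) (Fin 2) ℝ).mulVec ![1,0]
        = ![a * 1 + 0 * 0, c * 1 + 1 * 0] from mulVec2 a 0 c 1 ![1,0]]
    norm_num
  have hq : 0 < v' 0 ^ 2 + v' 1 ^ 2 := by
    rw [hv'e]
    simp only [Matrix.cons_val_zero, Matrix.cons_val_one, Matrix.head_cons]
    nlinarith
  obtain ⟨t, ht, hunit⟩ := unit_of_smul hq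
  have hmem : ζ₀ ∈ Tset E τ R n z (t • v') := by
    refine ⟨hz.symm, ?_⟩
    exact smul_mem_image E t ⟨![1,0], hw, hv'.symm⟩
  have h1 : 1 ≤ (Tset E τ R n z (t • v')).ncard :=
    (Set.ncard_pos (Tset_finite E τ R n z _)).mpr ⟨ζ₀, hmem⟩
  refine le_trans ?_ (ncard_Tset_le_nQ E τ R n z hunit)
  exact_mod_cast h1

lemma nQ_nonneg (R : ℝ) (n : ℕ) : 0 ≤ nQ E τ R n := by
  refine le_trans ?_ (ncard_Tset_le_nQ E τ R n (0,0) (unitvec_e0))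
  positivity

end NQ

lemma tri_solve {a c : ℝ} (ha : a ≠ 0) (v : Fin 2 → ℝ) :
    (!![a,0;c,1] : Matrix (Fin 2) (Fin 2) ℝ).mulVec ![v 0 / a, v 1 - c * (v 0 / a)] = v := by
  rw [mulVec2]
  funext i
  fin_cases i <;> simp <;> field_simp

lemma tri_inj {a c : ℝ} (ha : a ≠ 0) {x y : Fin 2 → ℝ}
    (h : (!![a,0;c,1] : Matrix (Fin 2) (Fin 2) ℝ).mulVec x
       = (!![a,0;c,1] : Matrix (Fin 2) (Fin 2) ℝ).mulVec y) : x = y := by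
  rw [mulVec2, mulVec2] at h
  have h0 := congrFun h 0
  have h1 := congrFun h 1
  simp only [Matrix.cons_val_zero, Matrix.cons_val_one, Matrix.head_cons] at h0 h1
  have hx0 : x 0 = y 0 := by
    simp only [zero_mul, add_zero] at h0
    exact mul_left_cancel₀ ha h0
  funext i
  fin_cases i
  · exact hx0
  · show x 1 = y 1
    rw [hx0] at h1; linarith

section Main
variable (E : ExpMap r ℓ) {s : ℕ∞} (τ : CrFun s)

lemma nQ_submult {d R : ℝ} (hτd : ∀ x : 𝕊, |deriv τ.toFun (rep x)| ≤ d) (hdR : d ≤ R)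
    (a b : ℕ) : nQ E τ R (a + b) ≤ nQ E τ R a * nQ E τ R b := by
  rw [nQ_eq]
  refine csSup_le (Sset_nonempty E τ R (a+b)) ?_
  rintro c ⟨z, v, hv, rfl⟩
  have key : ((Tset E τ R (a+b) z v).ncard : ℝ) ≤ (Tset E τ R b z v).ncard * nQ E τ R a := by
    refine ncard_le_of_fiber_bound ((skew E τ)^[a]) (Tset_finite E τ R (a+b) z v)
      (Tset_finite E τ R b z v) ?_ ?_
    · rintro ζ ⟨h1, u, hu, huv⟩
      constructor
      · rw [← Function.iterate_add_apply, Nat.add_comm b a]; exact h1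
      · rw [Jacn_add E τ a b ζ, ← Matrix.mulVec_mulVec] at huv
        exact ⟨(Jacn E τ a ζ).mulVec u, cone_invariant E τ hτd hdR a ζ hu, huv⟩
    · intro ζ' hζ'
      obtain ⟨a₀, c₀, hM, ha₀⟩ := Jacn_tri E τ b ζ'
      have ha₀0 : (0:ℝ) < a₀ := lt_of_lt_of_le (pow_pos E.lam_pos b) ha₀
      set w : Fin 2 → ℝ := ![v 0 / a₀, v 1 - c₀ * (v 0 / a₀)] with hwdef
      have hMw : (Jacn E τ b ζ').mulVec w = v := by rw [hM]; exact tri_solve (ne_of_gt ha₀0) v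
      have hq : 0 < w 0 ^ 2 + w 1 ^ 2 := by
        by_contra hq
        push_neg at hq
        have hw0 : w 0 = 0 := by nlinarith [sq_nonneg (w 0), sq_nonneg (w 1)]
        have hw1 : w 1 = 0 := by nlinarith [sq_nonneg (w 0), sq_nonneg (w 1)]
        have hv0 : v 0 = a₀ * w 0 + 0 * w 1 := by
          rw [← hMw, hM, mulVec2]; simp
        have hv1 : v 1 = c₀ * w 0 + 1 * w 1 := by
          rw [← hMw, hM, mulVec2]; simp
        rw [hw0, hw1] at hv0 hv1
        have : v 0 = 0 := by rw [hv0]; ring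
        have h2 : v 1 = 0 := by rw [hv1]; ring
        rw [IsUnitVec, this, h2] at hv
        norm_num at hv
      obtain ⟨t, ht, hunit⟩ := unit_of_smul hq
      have hsub : {ζ ∈ Tset E τ R (a+b) z v | (skew E τ)^[a] ζ = ζ'} ⊆
          Tset E τ R a ζ' (t • w) := by
        rintro ζ ⟨⟨h1, u, hu, huv⟩, h2⟩
        refine ⟨h2, ?_⟩
        rw [Jacn_add E τ a b ζ, ← Matrix.mulVec_mulVec, h2] at huv
        have huw : (Jacn E τ a ζ).mulVec u = w := by
          have : (Jacn E τ b ζ').mulVec ((Jacn E τ a ζ).mulVec u)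
               = (Jacn E τ b ζ').mulVec w := by rw [huv, hMw]
          rw [hM] at this
          exact tri_inj (ne_of_gt ha₀0) this
        refine ⟨t • u, inCone_smul hu, ?_⟩
        rw [Matrix.mulVec_smul, huw]
      calc (({ζ ∈ Tset E τ R (a+b) z v | (skew E τ)^[a] ζ = ζ'}).ncard : ℝ)
          ≤ ((Tset E τ R a ζ' (t • w)).ncard : ℝ) := by
            exact_mod_cast Nat.cast_le.mpr (Set.ncard_le_ncard hsub (Tset_finite E τ R a ζ' _))
      _ ≤ nQ E τ R a := ncard_Tset_le_nQ E τ R a ζ' hunit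
  calc ((Tset E τ R (a+b) z v).ncard : ℝ)
      ≤ (Tset E τ R b z v).ncard * nQ E τ R a := key
  _ ≤ nQ E τ R b * nQ E τ R a := by
      refine mul_le_mul_of_nonneg_right (ncard_Tset_le_nQ E τ R b z hv) ?_
      exact le_trans (by norm_num) (one_le_nQ E τ (le_trans (le_trans (abs_nonneg _) (hτd 0)) hdR) a)
  _ = nQ E τ R a * nQ E τ R b := mul_comm _ _

lemma nQ_mono_R {R₁ R₂ : ℝ} (h12 : R₁ ≤ R₂) (n : ℕ) : nQ E τ R₁ n ≤ nQ E τ R₂ n := by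
  rw [nQ_eq]
  refine csSup_le (Sset_nonempty E τ R₁ n) ?_
  rintro c ⟨z, v, hv, rfl⟩
  have hsub : Tset E τ R₁ n z v ⊆ Tset E τ R₂ n z v := by
    rintro ζ ⟨h1, u, hu, huv⟩
    refine ⟨h1, u, ?_, huv⟩
    refine inCone_mono ?_ hu
    have hpos : (0:ℝ) ≤ (E.lam - 1)⁻¹ :=
      inv_nonneg.mpr (by linarith [E.one_lt_lam])
    rw [div_eq_mul_inv, div_eq_mul_inv]
    exact mul_le_mul_of_nonneg_right h12 hpos
  refine le_trans ?_ (ncard_Tset_le_nQ E τ R₂ n z hv)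
  exact_mod_cast Nat.cast_le.mpr (Set.ncard_le_ncard hsub (Tset_finite E τ R₂ n z v))

lemma nQ_shift {d R₁ R₂ : ℝ} (hτd : ∀ x : 𝕊, |deriv τ.toFun (rep x)| ≤ d)
    (hdR : d < R₁) (hR₂ : 0 ≤ R₂) :
    ∃ n₀ : ℕ, ∀ n : ℕ, nQ E τ R₂ (n₀ + n) ≤ (ℓ : ℝ) ^ n₀ * nQ E τ R₁ n := by
  have hl1 : (1:ℝ) < E.lam := E.one_lt_lam
  have hd0 : 0 ≤ d := le_trans (abs_nonneg _) (hτd 0)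
  have hε : 0 < (R₁ - d) / (E.lam - 1) := div_pos (by linarith) (by linarith)
  set θ₂ := R₂ / (E.lam - 1) with hθ₂
  have hθ₂0 : 0 ≤ θ₂ := div_nonneg hR₂ (by linarith)
  obtain ⟨n₀, hn₀⟩ := pow_unbounded_of_one_lt (θ₂ / ((R₁ - d) / (E.lam - 1))) hl1
  have hcontract : θ₂ / E.lam ^ n₀ ≤ (R₁ - d) / (E.lam - 1) := by
    rw [div_le_iff₀ (pow_pos E.lam_pos n₀)]
    rw [div_lt_iff₀ hε] at hn₀
    linarith
  refine ⟨n₀, fun n => ?_⟩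
  rw [nQ_eq]
  refine csSup_le (Sset_nonempty E τ R₂ (n₀ + n)) ?_
  rintro c ⟨z, v, hv, rfl⟩
  have key : ((Tset E τ R₂ (n₀+n) z v).ncard : ℝ) ≤ (Tset E τ R₁ n z v).ncard * (ℓ:ℝ)^n₀ := by
    refine ncard_le_of_fiber_bound ((skew E τ)^[n₀]) (Tset_finite E τ R₂ (n₀+n) z v)
      (Tset_finite E τ R₁ n z v) ?_ ?_
    · rintro ζ ⟨h1, u, hu, huv⟩
      constructor
      · rw [← Function.iterate_add_apply, Nat.add_comm n n₀]; exact h1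
      · rw [Jacn_add E τ n₀ n ζ, ← Matrix.mulVec_mulVec] at huv
        refine ⟨(Jacn E τ n₀ ζ).mulVec u, ?_, huv⟩
        have hc := cone_contract E τ hτd n₀ ζ hθ₂0 hu
        refine inCone_mono ?_ hc
        have : d / (E.lam - 1) + (R₁ - d) / (E.lam - 1) = R₁ / (E.lam - 1) := by
          field_simp
          ring
        linarith [hcontract]
    · intro b hb
      refine le_trans ?_ (iter_fiber_ncard E τ n₀ b)
      refine Nat.cast_le.mpr (Set.ncard_le_ncard ?_ (iter_fiber_finite E τ n₀ b))
      rintro ζ ⟨_, h2⟩; exact h2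
  calc ((Tset E τ R₂ (n₀+n) z v).ncard : ℝ)
      ≤ (Tset E τ R₁ n z v).ncard * (ℓ:ℝ)^n₀ := key
  _ ≤ nQ E τ R₁ n * (ℓ:ℝ)^n₀ := by
      refine mul_le_mul_of_nonneg_right (ncard_Tset_le_nQ E τ R₁ n z hv) (by positivity)
  _ = (ℓ:ℝ)^n₀ * nQ E τ R₁ n := mul_comm _ _

end Main

section Fekete
variable (E : ExpMap r ℓ) {s : ℕ∞} (τ : CrFun s)

lemma tau_d (hs : 1 ≤ s) : ∀ x : 𝕊, |deriv τ.toFun (rep x)| ≤ τ.dsup := fun x =>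
  (dsup_bound τ hs).2 (rep x) (Set.mem_Icc_of_Ico (rep_mem x))

lemma fekete_pack (hτd : ∀ x : 𝕊, |deriv τ.toFun (rep x)| ≤ τ.dsup) {R : ℝ}
    (hR : τ.dsup < R) :
    ∃ L : ℝ, 0 ≤ L ∧
      Tendsto (fun n : ℕ => Real.log (nQ E τ R n) / n) atTop (𝓝 L) ∧
      (∀ n : ℕ, n ≠ 0 → L ≤ Real.log (nQ E τ R n) / n) := by
  have hd0 : 0 ≤ τ.dsup := le_trans (abs_nonneg _) (hτd 0)
  have hR0 : 0 ≤ R := le_trans hd0 (le_of_lt hR)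
  have hone : ∀ n, 1 ≤ nQ E τ R n := fun n => one_le_nQ E τ hR0 n
  have hpos : ∀ n, 0 < nQ E τ R n := fun n => lt_of_lt_of_le one_pos (hone n)
  set u : ℕ → ℝ := fun n => Real.log (nQ E τ R n) with hu
  have husub : Subadditive u := by
    intro m n
    have h1 : nQ E τ R (m + n) ≤ nQ E τ R m * nQ E τ R n :=
      nQ_submult E τ hτd (le_of_lt hR) m n
    calc u (m + n) ≤ Real.log (nQ E τ R m * nQ E τ R n) :=
          Real.log_le_log (hpos _) h1
    _ = u m + u n := Real.log_mul (ne_of_gt (hpos m)) (ne_of_gt (hpos n))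
  have hnn : ∀ n : ℕ, (0:ℝ) ≤ u n / n := fun n =>
    div_nonneg (Real.log_nonneg (hone n)) (Nat.cast_nonneg n)
  have hbdd : BddBelow (Set.range fun n : ℕ => u n / n) := by
    refine ⟨0, ?_⟩; rintro x ⟨n, rfl⟩; exact hnn n
  refine ⟨husub.lim, ?_, husub.tendsto_lim hbdd, fun n hn => husub.lim_le_div hbdd hn⟩

  exact ge_of_tendsto' (husub.tendsto_lim hbdd) hnn

lemma rpow_tendsto {R L : ℝ} (hone : ∀ n, 1 ≤ nQ E τ R n)
    (h : Tendsto (fun n : ℕ => Real.log (nQ E τ R n) / n) atTop (𝓝 L)) :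
    Tendsto (fun n : ℕ => nQ E τ R n ^ ((n : ℝ)⁻¹)) atTop (𝓝 (Real.exp L)) := by
  have hexp : Tendsto (fun n : ℕ => Real.exp (Real.log (nQ E τ R n) / n)) atTop
      (𝓝 (Real.exp L)) := (Real.continuous_exp.tendsto L).comp h
  refine hexp.congr' ?_
  filter_upwards [eventually_ge_atTop 1] with n hn
  have hpos : 0 < nQ E τ R n := lt_of_lt_of_le one_pos (hone n)
  rw [Real.rpow_def_of_pos hpos, div_eq_mul_inv]

lemma exp_lim_eq_iInf {R L : ℝ} (hone : ∀ n, 1 ≤ nQ E τ R n)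
    (h : Tendsto (fun n : ℕ => Real.log (nQ E τ R n) / n) atTop (𝓝 L))
    (hle : ∀ n : ℕ, n ≠ 0 → L ≤ Real.log (nQ E τ R n) / n) :
    Real.exp L = ⨅ k : ℕ, nQ E τ R (k + 1) ^ (((k : ℝ) + 1)⁻¹) := by
  have hpos : ∀ n, 0 < nQ E τ R n := fun n => lt_of_lt_of_le one_pos (hone n)
  have hterm : ∀ n : ℕ, n ≠ 0 → Real.exp (Real.log (nQ E τ R n) / n) = nQ E τ R n ^ ((n:ℝ)⁻¹) := by
    intro n hn
    rw [Real.rpow_def_of_pos (hpos n), div_eq_mul_inv]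
  have hbdd : BddBelow (Set.range fun k : ℕ => nQ E τ R (k + 1) ^ (((k : ℝ) + 1)⁻¹)) := by
    refine ⟨0, ?_⟩; rintro x ⟨k, rfl⟩
    exact Real.rpow_nonneg (le_trans zero_le_one (hone _)) _
  refine le_antisymm ?_ ?_
  · refine le_ciInf fun k => ?_
    have h1 := hle (k+1) (Nat.succ_ne_zero k)
    have h2 := Real.exp_le_exp.mpr h1
    rw [hterm (k+1) (Nat.succ_ne_zero k)] at h2
    refine le_trans h2 (le_of_eq ?_)
    norm_num
  · refine ge_of_tendsto (rpow_tendsto E τ hone h) ?_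
    filter_upwards [eventually_ge_atTop 1] with n hn
    obtain ⟨k, rfl⟩ := Nat.exists_eq_add_of_le hn
    have := ciInf_le hbdd k
    refine le_trans this (le_of_eq ?_)
    congr 1 <;> norm_num <;> ring

lemma L_le (hτd : ∀ x : 𝕊, |deriv τ.toFun (rep x)| ≤ τ.dsup) {R₁ R₂ L₁ L₂ : ℝ}
    (hR₁ : τ.dsup < R₁) (hR₂ : τ.dsup < R₂)
    (h₁ : Tendsto (fun n : ℕ => Real.log (nQ E τ R₁ n) / n) atTop (𝓝 L₁))
    (hle₂ : ∀ n : ℕ, n ≠ 0 → L₂ ≤ Real.log (nQ E τ R₂ n) / n) :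
    L₂ ≤ L₁ := by
  have hd0 : 0 ≤ τ.dsup := le_trans (abs_nonneg _) (hτd 0)
  have hR₂0 : 0 ≤ R₂ := le_trans hd0 (le_of_lt hR₂)
  have hone₁ : ∀ n, 1 ≤ nQ E τ R₁ n := fun n => one_le_nQ E τ (le_trans hd0 hR₁.le) n
  have hone₂ : ∀ n, 1 ≤ nQ E τ R₂ n := fun n => one_le_nQ E τ hR₂0 n
  obtain ⟨n₀, hn₀⟩ := nQ_shift E τ hτd hR₁ hR₂0
  -- the comparison sequence
  set g : ℕ → ℝ := fun n =>
    ((n₀ : ℝ) * Real.log ℓ) * ((n₀ : ℝ) + n)⁻¹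
     + (Real.log (nQ E τ R₁ n) / n) * ((n : ℝ) / ((n : ℝ) + n₀)) with hg
  have hA : Tendsto (fun n : ℕ => ((n₀ : ℝ) + n)⁻¹) atTop (𝓝 0) := by
    refine Filter.Tendsto.inv_tendsto_atTop ?_
    exact tendsto_atTop_add_const_left atTop _ tendsto_natCast_atTop_atTop
  have hB : Tendsto (fun n : ℕ => (n : ℝ) / ((n : ℝ) + n₀)) atTop (𝓝 1) :=
    tendsto_natCast_div_add_atTop (n₀ : ℝ)
  have hgt : Tendsto g atTop (𝓝 (((n₀ : ℝ) * Real.log ℓ) * 0 + L₁ * 1)) :=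
    Filter.Tendsto.add (Filter.Tendsto.const_mul _ hA) (Filter.Tendsto.mul h₁ hB)
  rw [mul_zero, mul_one, zero_add] at hgt
  refine ge_of_tendsto hgt ?_
  filter_upwards [eventually_ge_atTop 1] with n hn
  have hnne : (0:ℝ) < (n:ℝ) := by exact_mod_cast hn
  have hden : (0:ℝ) < (n₀ : ℝ) + n := by positivity
  -- L₂ ≤ log(nQ R₂ (n₀+n)) / (n₀+n)
  have h1 := hle₂ (n₀ + n) (by omega)
  -- log(nQ R₂ (n₀+n)) ≤ n₀ log ℓ + log (nQ R₁ n)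
  have hl2 : Real.log (nQ E τ R₂ (n₀ + n)) ≤
      (n₀ : ℝ) * Real.log ℓ + Real.log (nQ E τ R₁ n) := by
    have hstep := hn₀ n
    have hpos2 : (0:ℝ) < nQ E τ R₂ (n₀ + n) := lt_of_lt_of_le one_pos (hone₂ _)
    have hlℓ : (0:ℝ) < (ℓ:ℝ)^n₀ := by
      have : (0:ℝ) < (ℓ:ℝ) := by
        have h2 : 1 ≤ nQ E τ R₁ 1 := hone₁ 1
        have h3 : nQ E τ R₁ 1 ≤ (ℓ:ℝ)^1 := nQ_le_pow E τ R₁ 1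
        nlinarith
      positivity
    have hpos1 : (0:ℝ) < nQ E τ R₁ n := lt_of_lt_of_le one_pos (hone₁ n)
    calc Real.log (nQ E τ R₂ (n₀ + n)) ≤ Real.log ((ℓ:ℝ)^n₀ * nQ E τ R₁ n) :=
          Real.log_le_log hpos2 hstep
    _ = Real.log ((ℓ:ℝ)^n₀) + Real.log (nQ E τ R₁ n) :=
          Real.log_mul (ne_of_gt hlℓ) (ne_of_gt hpos1)
    _ = (n₀ : ℝ) * Real.log ℓ + Real.log (nQ E τ R₁ n) := by rw [Real.log_pow]
  refine le_trans h1 ?_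
  have hcast : ((n₀ + n : ℕ) : ℝ) = (n₀ : ℝ) + n := by push_cast; ring
  rw [hcast]
  have heq : ((n₀ : ℝ) * Real.log ℓ) * ((n₀ : ℝ) + n)⁻¹
      + (Real.log (nQ E τ R₁ n) / n) * ((n : ℝ) / ((n : ℝ) + n₀))
      = ((n₀ : ℝ) * Real.log ℓ + Real.log (nQ E τ R₁ n)) / ((n₀ : ℝ) + n) := by
    field_simp
    ring
  show _ ≤ g n
  simp only [hg]
  rw [heq]
  gcongr

end Fekete


end FinalAux

/-- For every `R > ‖τ'‖_∞` the limit `lim_n 𝔫(τ,R;n)^{1/n}` exists and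
equals `inf_{n ≥ 1} 𝔫(τ,R;n)^{1/n}`; the limit is independent of the choice of
`R > ‖τ'‖_∞`; and if the common value `𝔫(τ)` satisfies `𝔫(τ) ≥ e^ρ`, then
`𝔫(τ,R;n) ≥ e^{ρn}` for all `n ≥ 1`. -/
theorem stmt4 (r ℓ : ℕ) (hr : 2 ≤ r) (hl : 2 ≤ ℓ) (E : ExpMap r ℓ) (τ : CrFun r) :
    (∀ R : ℝ, τ.dsup < R →
      Tendsto (fun n : ℕ => nQ E τ R n ^ ((n : ℝ)⁻¹)) atTop
        (𝓝 (⨅ k : ℕ, nQ E τ R (k + 1) ^ (((k : ℝ) + 1)⁻¹)))) ∧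
    (∀ R₁ R₂ : ℝ, τ.dsup < R₁ → τ.dsup < R₂ →
      limUnder atTop (fun n : ℕ => nQ E τ R₁ n ^ ((n : ℝ)⁻¹)) =
        limUnder atTop (fun n : ℕ => nQ E τ R₂ n ^ ((n : ℝ)⁻¹))) ∧
    (∀ ρ : ℝ, Real.exp ρ ≤ nlim E τ →
      ∀ R : ℝ, τ.dsup < R → ∀ n : ℕ, 1 ≤ n → Real.exp (ρ * n) ≤ nQ E τ R n) := by
  have hs : (1 : ℕ∞) ≤ (r : ℕ∞) := by exact_mod_cast (by omega : 1 ≤ r)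
  have hτd := tau_d τ hs
  have hd0 : 0 ≤ τ.dsup := le_trans (abs_nonneg _) (hτd 0)
  have part1 : ∀ R : ℝ, τ.dsup < R →
      Tendsto (fun n : ℕ => nQ E τ R n ^ ((n : ℝ)⁻¹)) atTop
        (𝓝 (⨅ k : ℕ, nQ E τ R (k + 1) ^ (((k : ℝ) + 1)⁻¹))) := by
    intro R hR
    obtain ⟨L, hL0, hLt, hLle⟩ := fekete_pack E τ hτd hR
    have hone : ∀ n, 1 ≤ nQ E τ R n := fun n => one_le_nQ E τ (le_trans hd0 hR.le) n
    have h := rpow_tendsto E τ hone hLt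
    rwa [exp_lim_eq_iInf E τ hone hLt hLle] at h
  refine ⟨part1, ?_, ?_⟩
  · intro R₁ R₂ h1 h2
    obtain ⟨L₁, _, hT₁, hle₁⟩ := fekete_pack E τ hτd h1
    obtain ⟨L₂, _, hT₂, hle₂⟩ := fekete_pack E τ hτd h2
    have hone₁ : ∀ n, 1 ≤ nQ E τ R₁ n := fun n => one_le_nQ E τ (le_trans hd0 h1.le) n
    have hone₂ : ∀ n, 1 ≤ nQ E τ R₂ n := fun n => one_le_nQ E τ (le_trans hd0 h2.le) n
    have hE : L₁ = L₂ :=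
      le_antisymm (L_le E τ hτd h2 h1 hT₂ hle₁) (L_le E τ hτd h1 h2 hT₁ hle₂)
    rw [(rpow_tendsto E τ hone₁ hT₁).limUnder_eq, (rpow_tendsto E τ hone₂ hT₂).limUnder_eq, hE]
  · intro ρ hρ R hR n hn
    have hR₀ : τ.dsup < τ.dsup + 1 := lt_add_one _
    obtain ⟨L₀, hL₀0, hT₀, hle₀⟩ := fekete_pack E τ hτd hR₀
    obtain ⟨L, hL0, hT, hle⟩ := fekete_pack E τ hτd hR
    have hone₀ : ∀ m, 1 ≤ nQ E τ (τ.dsup + 1) m := fun m => one_le_nQ E τ (by linarith) m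
    have hone : ∀ m, 1 ≤ nQ E τ R m := fun m => one_le_nQ E τ (le_trans hd0 hR.le) m
    have hnlim : nlim E τ = Real.exp L₀ :=
      Filter.Tendsto.limUnder_eq (rpow_tendsto E τ hone₀ hT₀)
    have hLeq : L₀ = L :=
      le_antisymm (L_le E τ hτd hR hR₀ hT hle₀) (L_le E τ hτd hR₀ hR hT₀ hle)
    have hρL : ρ ≤ L := by
      rw [hnlim] at hρ
      have := Real.exp_le_exp.mp hρ
      linarith [hLeq]
    have h1 := hle n (by omega)
    have hn0 : (0:ℝ) < (n : ℝ) := by exact_mod_cast hn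
    have h2 : ρ * n ≤ Real.log (nQ E τ R n) :=
      (le_div_iff₀ hn0).mp (le_trans hρL h1)
    calc Real.exp (ρ * n) ≤ Real.exp (Real.log (nQ E τ R n)) := Real.exp_le_exp.mpr h2
    _ = nQ E τ R n := Real.exp_log (lt_of_lt_of_le one_pos (hone n))
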